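/- Let X, Y be finite sets of integers with doubling |X + X| ≤ K·|X| and |Y + Y| ≤ K·|Y|, where K ≥ 1 and X, Y are nonempty. Then the sumset Z = X + Y has doubling |Z + Z| ≤ K⁸·|Z|. -/

import Mathlib

open Pointwise

lemma triple_doubling (A : Finset ℤ) (hA : A.Nonempty) (K : ℝ) (hK0 : 0 ≤ K)
    (hAd : ((A + A).card : ℝ) ≤ K * A.card) :
    ((A + A + A).card : ℝ) ≤ K ^ 3 * A.card := by
  have h := Finset.pluennecke_ruzsa_inequality_nsmul_add hA A 3
  have h3 : (3 : ℕ) • A = A + A + A := by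
    rw [succ_nsmul, succ_nsmul, one_nsmul]
  rw [h3] at h
  have hApos : (0 : ℚ≥0) < A.card := by exact_mod_cast hA.card_pos
  have hq : ((A + A + A).card : ℚ≥0) * (A.card : ℚ≥0) ^ 3
      ≤ ((A + A).card : ℚ≥0) ^ 3 * A.card := by
    calc ((A + A + A).card : ℚ≥0) * (A.card : ℚ≥0) ^ 3
        ≤ ((((A + A).card : ℚ≥0) / A.card) ^ 3 * A.card) * (A.card : ℚ≥0) ^ 3 :=
          mul_le_mul_of_nonneg_right h (by positivity)
      _ = ((A + A).card : ℚ≥0) ^ 3 * A.card := by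
          field_simp
  have hnat : (A + A + A).card * A.card ^ 3 ≤ (A + A).card ^ 3 * A.card := by
    exact_mod_cast hq
  have hR : ((A + A + A).card : ℝ) * (A.card : ℝ) ^ 3
      ≤ ((A + A).card : ℝ) ^ 3 * A.card := by exact_mod_cast hnat
  have haR : (0 : ℝ) < (A.card : ℝ) := by exact_mod_cast hA.card_pos
  have hcube : ((A + A).card : ℝ) ^ 3 ≤ (K * A.card) ^ 3 :=
    pow_le_pow_left₀ (by positivity) hAd 3
  have : ((A + A + A).card : ℝ) * (A.card : ℝ) ^ 3 ≤ K ^ 3 * A.card * (A.card : ℝ) ^ 3 := by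
    calc ((A + A + A).card : ℝ) * (A.card : ℝ) ^ 3 ≤ ((A + A).card : ℝ) ^ 3 * A.card := hR
      _ ≤ (K * A.card) ^ 3 * A.card := mul_le_mul_of_nonneg_right hcube haR.le
      _ = K ^ 3 * A.card * (A.card : ℝ) ^ 3 := by ring
  exact le_of_mul_le_mul_right this (by positivity)

/-- If `X` and `Y` are nonempty finite sets of integers with doubling at most `K`,
then the sumset `X + Y` has doubling at most `K^8`. -/
theorem doubling_of_sumset (X Y : Finset ℤ) (hX : X.Nonempty) (hY : Y.Nonempty)
    (K : ℝ) (hK : 1 ≤ K)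
    (hXd : ((X + X).card : ℝ) ≤ K * X.card)
    (hYd : ((Y + Y).card : ℝ) ≤ K * Y.card) :
    (((X + Y) + (X + Y)).card : ℝ) ≤ K ^ 8 * (X + Y).card := by
  have hK0 : (0 : ℝ) ≤ K := le_trans zero_le_one hK
  have hX3 := triple_doubling X hX K hK0 hXd
  have hY3 := triple_doubling Y hY K hK0 hYd
  have hrw : (X + Y) + (X + Y) = (X + X) + (Y + Y) := by
    rw [add_add_add_comm]
  rw [hrw]
  have h1 : ((X + X) + (Y + Y)).card * X.card
      ≤ ((X + X) + X).card * (X + (Y + Y)).card :=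
    Finset.ruzsa_triangle_inequality_add_add_add (X + X) X (Y + Y)
  have h2 : (X + (Y + Y)).card * Y.card ≤ (X + Y).card * (Y + (Y + Y)).card :=
    Finset.ruzsa_triangle_inequality_add_add_add X Y (Y + Y)
  have hYassoc : Y + (Y + Y) = Y + Y + Y := (add_assoc Y Y Y).symm
  have hxpos : (0 : ℝ) < (X.card : ℝ) := by exact_mod_cast hX.card_pos
  have hypos : (0 : ℝ) < (Y.card : ℝ) := by exact_mod_cast hY.card_pos
  have h1R : (((X + X) + (Y + Y)).card : ℝ) * X.card
      ≤ (((X + X) + X).card : ℝ) * (X + (Y + Y)).card := by exact_mod_cast h1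
  have h2R : ((X + (Y + Y)).card : ℝ) * Y.card
      ≤ ((X + Y).card : ℝ) * ((Y + Y + Y)).card := by
    rw [← hYassoc]; exact_mod_cast h2
  -- Step 1: w ≤ K^3 * z
  have hw : ((X + (Y + Y)).card : ℝ) ≤ K ^ 3 * (X + Y).card := by
    have : ((X + (Y + Y)).card : ℝ) * Y.card ≤ K ^ 3 * (X + Y).card * Y.card := by
      calc ((X + (Y + Y)).card : ℝ) * Y.card
          ≤ ((X + Y).card : ℝ) * ((Y + Y + Y)).card := h2R
        _ ≤ ((X + Y).card : ℝ) * (K ^ 3 * Y.card) :=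
            mul_le_mul_of_nonneg_left hY3 (by positivity)
        _ = K ^ 3 * (X + Y).card * Y.card := by ring
    exact le_of_mul_le_mul_right this hypos
  -- Step 2: t ≤ K^3 * w
  have ht : (((X + X) + (Y + Y)).card : ℝ) ≤ K ^ 3 * (X + (Y + Y)).card := by
    have : (((X + X) + (Y + Y)).card : ℝ) * X.card
        ≤ K ^ 3 * (X + (Y + Y)).card * X.card := by
      calc (((X + X) + (Y + Y)).card : ℝ) * X.card
          ≤ (((X + X) + X).card : ℝ) * (X + (Y + Y)).card := h1R
        _ ≤ (K ^ 3 * X.card) * (X + (Y + Y)).card :=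
            mul_le_mul_of_nonneg_right hX3 (by positivity)
        _ = K ^ 3 * (X + (Y + Y)).card * X.card := by ring
    exact le_of_mul_le_mul_right this hxpos
  calc (((X + X) + (Y + Y)).card : ℝ)
      ≤ K ^ 3 * (X + (Y + Y)).card := ht
    _ ≤ K ^ 3 * (K ^ 3 * (X + Y).card) := mul_le_mul_of_nonneg_left hw (by positivity)
    _ = K ^ 6 * (X + Y).card := by ring
    _ ≤ K ^ 8 * (X + Y).card := by
        have : K ^ 6 ≤ K ^ 8 := pow_le_pow_right₀ hK (by norm_num)
        exact mul_le_mul_of_nonneg_right this (by positivity)
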